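/- Let $X$ be a finite subset of $\mathbb{A}^s = K^s$ over a field $K$, let $I = I(X)$ be its vanishing ideal, and let $\prec$ be a monomial order on $S$. If $F$ is a finite set of polynomials of $S$ with $(I : (F)) \neq I$, then $|V_X(F)| = \deg(S/(I,F)) \le \deg(S/(\mathrm{in}_\prec(I), \mathrm{in}_\prec(F))) \le \deg(S/I) = |X|$; moreover $\deg(S/(I,F)) < \deg(S/I)$ if $(F) \not\subseteq I$. -/

import Mathlib

open MvPolynomial
open scoped MonomialOrder

variable {K : Type*} [Field K] {s : ℕ}

/-- The exponent of the initial (leading) monomial of `f` with respect to the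
monomial order `m` (it is `0` for `f = 0`). -/
noncomputable def leadExp (m : MonomialOrder (Fin s)) (f : MvPolynomial (Fin s) K) :
    Fin s →₀ ℕ :=
  m.toSyn.symm (f.support.sup fun a => m.toSyn a)

/-- The coefficient of the initial monomial of `f`; `f` is monic when this is `1`. -/
noncomputable def leadCoeff (m : MonomialOrder (Fin s)) (f : MvPolynomial (Fin s) K) : K :=
  f.coeff (leadExp m f)

/-- The initial monomial `in_≺(f)` of `f`, as a (monic) monomial of the polynomial ring. -/
noncomputable def leadMon (m : MonomialOrder (Fin s)) (f : MvPolynomial (Fin s) K) :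
    MvPolynomial (Fin s) K :=
  monomial (leadExp m f) (1 : K)

/-- The initial ideal `in_≺(I)` of an ideal `I`: the ideal generated by the initial
monomials of the nonzero elements of `I`. -/
noncomputable def initialIdeal (m : MonomialOrder (Fin s)) (I : Ideal (MvPolynomial (Fin s) K)) :
    Ideal (MvPolynomial (Fin s) K) :=
  Ideal.span { g | ∃ f ∈ I, f ≠ 0 ∧ g = leadMon m f }

/-- The footprint `Δ_≺(I)` of `S/I`: the set of standard monomials, i.e. the (monic)
monomials that do not belong to the initial ideal of `I`. -/
noncomputable def stdMonomials (m : MonomialOrder (Fin s)) (I : Ideal (MvPolynomial (Fin s) K)) :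
    Set (MvPolynomial (Fin s) K) :=
  { g | (∃ a : Fin s →₀ ℕ, g = monomial a (1 : K)) ∧ g ∉ initialIdeal m I }

/-- `KΔ_≺(I)`, the `K`-linear span of the standard monomials of `S/I`. -/
noncomputable def stdSpan (m : MonomialOrder (Fin s)) (I : Ideal (MvPolynomial (Fin s) K)) :
    Submodule K (MvPolynomial (Fin s) K) :=
  Submodule.span K (stdMonomials m I)

/-- A monomial order is graded if monomials are first compared by their total degrees. -/
def IsGradedOrder (m : MonomialOrder (Fin s)) : Prop :=
  ∀ a b : Fin s →₀ ℕ, a.degree < b.degree → a ≺[m] b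

/-- The vanishing ideal `I(X)` of a set of points `X ⊆ 𝔸^s = K^s`. -/
def affVanishingIdeal (X : Set (Fin s → K)) : Ideal (MvPolynomial (Fin s) K) where
  carrier := { f | ∀ x ∈ X, eval x f = 0 }
  add_mem' := by
    intro a b ha hb x hx
    simp [ha x hx, hb x hx]
  zero_mem' := by intro x hx; simp
  smul_mem' := by
    intro c f hf x hx
    simp [smul_eq_mul, hf x hx]

/-- The evaluation map `S → K^X`, `f ↦ (f(P₁),…,f(P_m))`, at the points of a finite
set `X` of points of `𝔸^s`. -/
noncomputable def evalMap (X : Finset (Fin s → K)) :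
    MvPolynomial (Fin s) K →ₗ[K] (X → K) where
  toFun f := fun x => eval (x : Fin s → K) f
  map_add' f g := by funext x; simp
  map_smul' c f := by funext x; simp [Algebra.smul_def]

/-- The degree `deg(S/I)`.  For the ideals considered in this paper `S/I` is a
zero-dimensional ring, and its degree (the normalized leading coefficient of the
affine Hilbert polynomial) equals `dim_K (S/I)` (and is `0` when `I = S`). -/
noncomputable def adeg (I : Ideal (MvPolynomial (Fin s) K)) : ℕ :=
  Module.finrank K (MvPolynomial (Fin s) K ⧸ I)

/-- The affine Hilbert function `H_I^a(d) = dim_K (S_{≤d}/I_{≤d})`, computed as the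
dimension of the image of `S_{≤d}` in `S/I`. -/
noncomputable def affineHilbert (I : Ideal (MvPolynomial (Fin s) K)) (d : ℕ) : ℕ :=
  Module.finrank K
    ((restrictTotalDegree (Fin s) K d).map (Submodule.restrictScalars K I).mkQ)

/-- The support `χ(D)` of a subcode `D ⊆ K^ι`. -/
def codeSupport {ι : Type*} (D : Submodule K (ι → K)) : Set ι :=
  { i | ∃ v ∈ D, v i ≠ 0 }

/-- The `r`-th generalized Hamming weight of a linear code `C ⊆ K^ι`: the minimum
size of the support of an `r`-dimensional subcode. -/
noncomputable def ghw {ι : Type*} (C : Submodule K (ι → K)) (r : ℕ) : ℕ :=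
  sInf { n | ∃ D : Submodule K (ι → K),
    D ≤ C ∧ Module.finrank K (↥D) = r ∧ (codeSupport D).ncard = n }

/-- The minimum distance of a linear code: the least Hamming weight of a nonzero
codeword. -/
noncomputable def minDist {ι : Type*} (C : Submodule K (ι → K)) : ℕ :=
  sInf { n | ∃ v ∈ C, v ≠ 0 ∧ ({ i : ι | v i ≠ 0 }).ncard = n }

/-- The affine torus `T = (K^*)^s`. -/
noncomputable def torus (K : Type*) [Field K] [Fintype K] (s : ℕ) : Finset (Fin s → K) :=
  letI := Classical.decEq K
  Finset.univ.filter fun x => ∀ i, x i ≠ 0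

/-- `V_d`: the set of squarefree (monic) monomials of degree `d`. -/
def sqfreeMonomials (K : Type*) [Field K] (s d : ℕ) : Set (MvPolynomial (Fin s) K) :=
  { g | ∃ a : Fin s →₀ ℕ, (∀ i, a i ≤ 1) ∧ a.degree = d ∧ g = monomial a (1 : K) }

/-- `V_{≤d}`: the set of squarefree (monic) monomials of degree at most `d`. -/
def sqfreeMonomialsLe (K : Type*) [Field K] (s d : ℕ) : Set (MvPolynomial (Fin s) K) :=
  { g | ∃ a : Fin s →₀ ℕ, (∀ i, a i ≤ 1) ∧ a.degree ≤ d ∧ g = monomial a (1 : K) }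

/-- `V_X(F)`: the affine variety of `F` in `X`. -/
def VX (X : Finset (Fin s → K)) (F : Finset (MvPolynomial (Fin s) K)) : Set (Fin s → K) :=
  { x | x ∈ X ∧ ∀ f ∈ F, eval x f = 0 }

/-- `in_≺(F)`: the set of initial monomials of the (nonzero) elements of `F`. -/
noncomputable def leadMonSet (m : MonomialOrder (Fin s))
    (F : Finset (MvPolynomial (Fin s) K)) : Set (MvPolynomial (Fin s) K) :=
  { g | ∃ f ∈ F, f ≠ 0 ∧ g = leadMon m f }

section Aux
variable (m : MonomialOrder (Fin s))

lemma toSyn_leadExp (f : MvPolynomial (Fin s) K) :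
    m.toSyn (leadExp m f) = f.support.sup fun a => m.toSyn a :=
  m.toSyn.apply_symm_apply _

lemma le_toSyn_leadExp {f : MvPolynomial (Fin s) K} {a : Fin s →₀ ℕ} (ha : a ∈ f.support) :
    m.toSyn a ≤ m.toSyn (leadExp m f) := by
  rw [toSyn_leadExp]; exact Finset.le_sup ha

lemma leadExp_mem {f : MvPolynomial (Fin s) K} (hf : f ≠ 0) : leadExp m f ∈ f.support := by
  obtain ⟨a, ha, h⟩ := Finset.exists_mem_eq_sup f.support (support_nonempty.2 hf)
    fun a => m.toSyn a
  have : leadExp m f = a := by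
    apply m.toSyn.injective; rw [toSyn_leadExp, h]
  rw [this]; exact ha

lemma leadCoeff_ne_zero {f : MvPolynomial (Fin s) K} (hf : f ≠ 0) : leadCoeff m f ≠ 0 :=
  mem_support_iff.1 (leadExp_mem m hf)

lemma leadExp_monomial (b : Fin s →₀ ℕ) : leadExp m (monomial b (1 : K)) = b := by
  classical
  apply m.toSyn.injective
  rw [toSyn_leadExp, support_monomial, if_neg (one_ne_zero (α := K)), Finset.sup_singleton]

lemma leadMon_monomial (b : Fin s →₀ ℕ) :
    leadMon m (monomial b (1 : K)) = monomial b (1 : K) := by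
  rw [leadMon, leadExp_monomial]

/-- every exponent in the support of an element of a span of monic monomials is
divisible by the exponent of one of the generators -/
lemma support_of_mem_monomial_span {G : Set (MvPolynomial (Fin s) K)}
    (hG : ∀ g ∈ G, ∃ b : Fin s →₀ ℕ, g = monomial b (1 : K))
    {f : MvPolynomial (Fin s) K} (hf : f ∈ Ideal.span G) :
    ∀ a ∈ f.support, ∃ g ∈ G, ∃ b c : Fin s →₀ ℕ, g = monomial b (1 : K) ∧ a = b + c := by
  classical
  refine Submodule.span_induction ?_ ?_ ?_ ?_ hf
  · intro g hg a ha
    obtain ⟨b, rfl⟩ := hG g hg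
    rw [support_monomial, if_neg (one_ne_zero (α := K)), Finset.mem_singleton] at ha
    exact ⟨_, hg, b, 0, rfl, by rw [ha, add_zero]⟩
  · intro a ha
    simp at ha
  · intro p q _ _ hp hq a ha
    rcases Finset.mem_union.1 (support_add ha) with h | h
    · exact hp a h
    · exact hq a h
  · intro p q _ hq a ha
    rw [smul_eq_mul] at ha
    obtain ⟨u, hu, v, hv, rfl⟩ := Finset.mem_add.1 (support_mul p q ha)
    obtain ⟨g, hg, b, c, hgb, hvc⟩ := hq v hv
    exact ⟨g, hg, b, c + u, hgb, by rw [hvc]; abel⟩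

lemma monomial_mem_monomial_span {G : Set (MvPolynomial (Fin s) K)}
    (hG : ∀ g ∈ G, ∃ b : Fin s →₀ ℕ, g = monomial b (1 : K))
    {a : Fin s →₀ ℕ} (ha : monomial a (1 : K) ∈ Ideal.span G) :
    ∃ g ∈ G, ∃ b c : Fin s →₀ ℕ, g = monomial b (1 : K) ∧ a = b + c := by
  classical
  refine support_of_mem_monomial_span hG ha a ?_
  rw [support_monomial, if_neg (one_ne_zero (α := K))]
  exact Finset.mem_singleton_self a

lemma monomial_dvd_mem_span {G : Set (MvPolynomial (Fin s) K)} {g : MvPolynomial (Fin s) K}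
    (hg : g ∈ G) {b c : Fin s →₀ ℕ} (hgb : g = monomial b (1 : K)) :
    monomial (b + c) (1 : K) ∈ Ideal.span G := by
  have : monomial (b + c) (1 : K) = monomial c (1 : K) * g := by
    rw [hgb, monomial_mul, one_mul, add_comm]
  rw [this]
  exact Ideal.mul_mem_left _ _ (Ideal.subset_span hg)

end Aux

section Aux2
variable (m : MonomialOrder (Fin s))

/-- The standard monomials (w.r.t. a monomial ideal `M` of "initial forms" of elements
of `I₂`) span the quotient by `I₂`. -/
lemma span_std (I₂ M : Ideal (MvPolynomial (Fin s) K))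
    (hdiv : ∀ a : Fin s →₀ ℕ, monomial a (1 : K) ∈ M →
      ∃ h ∈ I₂, h ≠ 0 ∧ ∃ b : Fin s →₀ ℕ, a = b + leadExp m h) :
    Submodule.span K
      (Set.range fun a : {a : Fin s →₀ ℕ // monomial a (1 : K) ∉ M} =>
        (Submodule.restrictScalars K I₂).mkQ (monomial (a : Fin s →₀ ℕ) (1 : K))) = ⊤ := by
  classical
  set W := Submodule.span K
      (Set.range fun a : {a : Fin s →₀ ℕ // monomial a (1 : K) ∉ M} =>
        (Submodule.restrictScalars K I₂).mkQ (monomial (a : Fin s →₀ ℕ) (1 : K))) with hW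
  have wf : WellFounded (fun a b : (Fin s →₀ ℕ) => m.toSyn a < m.toSyn b) :=
    InvImage.wf _ m.wf.wf
  have main : ∀ a : Fin s →₀ ℕ,
      (Submodule.restrictScalars K I₂).mkQ (monomial a (1 : K)) ∈ W := by
    intro a
    refine wf.induction
      (C := fun a => (Submodule.restrictScalars K I₂).mkQ (monomial a (1 : K)) ∈ W) a ?_
    clear a; intro a IH
    by_cases hM : monomial a (1 : K) ∈ M
    · obtain ⟨h, hI, h0, b, hab⟩ := hdiv a hM
      set c := leadCoeff m h with hc
      have hc0 : c ≠ 0 := leadCoeff_ne_zero m h0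
      set e := leadExp m h with he
      set q := monomial b (c⁻¹) * h with hq
      set r := monomial a (1 : K) - q with hr
      have hkey : ∀ a' ∈ r.support, m.toSyn a' < m.toSyn a := by
        intro a' ha'
        have hne : r.coeff a' ≠ 0 := mem_support_iff.1 ha'
        rcases lt_or_ge (m.toSyn a') (m.toSyn a) with hlt | hge
        · exact hlt
        exfalso
        by_cases hcase : a' = a
        · apply hne
          rw [hr, coeff_sub, coeff_monomial, if_pos hcase.symm, hq, hcase, hab,
            coeff_monomial_mul]
          rw [show coeff e h = c from rfl, inv_mul_cancel₀ hc0, sub_self]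
        · have hq' : q.coeff a' ≠ 0 := by
            intro h'
            apply hne
            rw [hr, coeff_sub, coeff_monomial, if_neg (fun hh => hcase hh.symm), h', sub_zero]
          have ha'q : a' ∈ q.support := mem_support_iff.2 hq'
          obtain ⟨u, hu, v, hv, rfl⟩ := Finset.mem_add.1
            ((support_mul (monomial b (c⁻¹)) h) ha'q)
          rw [support_monomial, if_neg (inv_ne_zero hc0), Finset.mem_singleton] at hu
          subst hu
          have hvle : m.toSyn v ≤ m.toSyn e := le_toSyn_leadExp m hv
          have h1 : m.toSyn (u + v) ≤ m.toSyn a := by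
            rw [hab, map_add, map_add]
            exact add_le_add le_rfl hvle
          exact hcase (m.toSyn.injective (le_antisymm h1 hge))
      have hqI : q ∈ I₂ := Ideal.mul_mem_left _ _ hI
      have hmk : (Submodule.restrictScalars K I₂).mkQ (monomial a (1 : K))
          = (Submodule.restrictScalars K I₂).mkQ r := by
        rw [Submodule.mkQ_apply, Submodule.mkQ_apply, Submodule.Quotient.eq]
        simpa [hr] using hqI
      rw [hmk, show r = ∑ v ∈ r.support, monomial v (coeff v r) from r.as_sum, map_sum]
      refine Submodule.sum_mem _ fun v hv => ?_
      rw [show (monomial v (coeff v r) : MvPolynomial (Fin s) K)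
            = (coeff v r) • monomial v (1 : K) by rw [smul_monomial, smul_eq_mul, mul_one],
        map_smul]
      exact Submodule.smul_mem _ _ (IH v (hkey v hv))
    · exact Submodule.subset_span ⟨⟨a, hM⟩, rfl⟩
  rw [eq_top_iff]
  rintro x -
  obtain ⟨f, rfl⟩ := Submodule.mkQ_surjective _ x
  rw [show f = ∑ v ∈ f.support, monomial v (coeff v f) from f.as_sum, map_sum]
  refine Submodule.sum_mem _ fun v hv => ?_
  rw [show (monomial v (coeff v f) : MvPolynomial (Fin s) K)
        = (coeff v f) • monomial v (1 : K) by rw [smul_monomial, smul_eq_mul, mul_one],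
    map_smul]
  exact Submodule.smul_mem _ _ (main v)

/-- Standard monomials are linearly independent in the quotient. -/
lemma indep_std (I₂ M : Ideal (MvPolynomial (Fin s) K))
    (hM : ∀ f ∈ I₂, f ≠ 0 → ∃ a ∈ f.support, monomial a (1 : K) ∈ M) :
    LinearIndependent K
      (fun a : {a : Fin s →₀ ℕ // monomial a (1 : K) ∉ M} =>
        (Submodule.restrictScalars K I₂).mkQ (monomial (a : Fin s →₀ ℕ) (1 : K))) := by
  classical
  rw [linearIndependent_iff']
  intro t g hsum i hi
  set f : MvPolynomial (Fin s) K := ∑ j ∈ t, monomial (j : Fin s →₀ ℕ) (g j) with hf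
  have hmk : (Submodule.restrictScalars K I₂).mkQ f = 0 := by
    rw [hf, map_sum, ← hsum]
    refine Finset.sum_congr rfl fun j _ => ?_
    rw [show (monomial (j : Fin s →₀ ℕ) (g j) : MvPolynomial (Fin s) K)
          = (g j) • monomial (j : Fin s →₀ ℕ) (1 : K) by rw [smul_monomial, smul_eq_mul, mul_one],
      map_smul]
  have hfI : f ∈ I₂ := by
    rwa [Submodule.mkQ_apply, Submodule.Quotient.mk_eq_zero] at hmk
  have hf0 : f = 0 := by
    by_contra h0
    obtain ⟨a, ha, haM⟩ := hM f hfI h0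
    have := support_sum ha
    rw [Finset.mem_biUnion] at this
    obtain ⟨j, hj, haj⟩ := this
    have : a = (j : Fin s →₀ ℕ) := by
      by_cases hgj : g j = 0
      · rw [support_monomial, if_pos hgj] at haj; simp at haj
      · rw [support_monomial, if_neg hgj, Finset.mem_singleton] at haj; exact haj
    exact j.2 (this ▸ haM)
  have : coeff (i : Fin s →₀ ℕ) f = g i := by
    rw [hf, coeff_sum]
    rw [Finset.sum_eq_single i]
    · rw [coeff_monomial, if_pos rfl]
    · intro j hj hji
      rw [coeff_monomial, if_neg (fun hh => hji (Subtype.ext hh))]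
    · intro hit; exact absurd hi hit
  rw [← this, hf0]
  simp

end Aux2

section Aux3

lemma mem_affVanishingIdeal {X : Set (Fin s → K)} {f : MvPolynomial (Fin s) K} :
    f ∈ affVanishingIdeal X ↔ ∀ x ∈ X, eval x f = 0 := Iff.rfl

/-- indicator polynomial of a point of a finite set -/
lemma exists_indicator (W : Finset (Fin s → K)) (x : Fin s → K) :
    ∃ e : MvPolynomial (Fin s) K, eval x e = 1 ∧ ∀ y ∈ W, y ≠ x → eval y e = 0 := by
  classical
  set d : (Fin s → K) → MvPolynomial (Fin s) K := fun y =>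
    if h : ∃ i, x i ≠ y i then
      (MvPolynomial.X (Classical.choose h) - C (y (Classical.choose h))) *
        C ((x (Classical.choose h) - y (Classical.choose h))⁻¹)
    else 1 with hd
  have hdx : ∀ y, eval x (d y) = 1 := by
    intro y
    rw [hd]
    by_cases h : ∃ i, x i ≠ y i
    · have hi := Classical.choose_spec h
      simp only [dif_pos h, map_mul, map_sub, eval_X, eval_C]
      rw [mul_inv_cancel₀ (sub_ne_zero.2 hi)]
    · simp [dif_neg h]
  have hdy : ∀ y, y ≠ x → eval y (d y) = 0 := by
    intro y hyx
    have h : ∃ i, x i ≠ y i := by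
      by_contra hcon
      push_neg at hcon
      exact hyx (funext fun i => (hcon i).symm)
    rw [hd]
    simp only [dif_pos h, map_mul, map_sub, eval_X, eval_C]
    rw [sub_self, zero_mul]
  refine ⟨∏ y ∈ W.erase x, d y, ?_, ?_⟩
  · rw [map_prod]
    exact Finset.prod_eq_one fun y _ => hdx y
  · intro y hy hyx
    rw [map_prod]
    exact Finset.prod_eq_zero (Finset.mem_erase.2 ⟨hyx, hy⟩) (hdy y hyx)

lemma evalMap_surjective (X : Finset (Fin s → K)) :
    Function.Surjective (evalMap (K := K) X) := by
  classical
  intro v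
  refine ⟨∑ x ∈ X.attach, C (v x) * Classical.choose (exists_indicator X (x : Fin s → K)), ?_⟩
  funext z
  show eval (z : Fin s → K) _ = v z
  rw [map_sum]
  rw [Finset.sum_eq_single z]
  · obtain ⟨h1, _⟩ := Classical.choose_spec (exists_indicator X (z : Fin s → K))
    rw [map_mul, eval_C, h1, mul_one]
  · intro x _ hxz
    obtain ⟨_, h2⟩ := Classical.choose_spec (exists_indicator X (x : Fin s → K))
    rw [map_mul, eval_C, h2 z z.2 (fun hh => hxz (Subtype.ext hh).symm), mul_zero]
  · intro hz; exact absurd (Finset.mem_attach X z) hz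

lemma ker_evalMap (X : Finset (Fin s → K)) :
    LinearMap.ker (evalMap (K := K) X)
      = Submodule.restrictScalars K (affVanishingIdeal (X : Set (Fin s → K))) := by
  ext f
  rw [LinearMap.mem_ker]
  constructor
  · intro h x hx
    exact congrFun h ⟨x, hx⟩
  · intro h
    funext x
    exact h x x.2

/-- The linear equivalence `S/I(Y) ≃ K^Y`. -/
noncomputable def vanishingEquiv (Y : Finset (Fin s → K)) :
    (MvPolynomial (Fin s) K ⧸ affVanishingIdeal (Y : Set (Fin s → K))) ≃ₗ[K] (Y → K) :=
  ((Submodule.Quotient.restrictScalarsEquiv K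
      (affVanishingIdeal (Y : Set (Fin s → K)))).symm.trans
    (Submodule.quotEquivOfEq _ _ (ker_evalMap Y).symm)).trans
    ((evalMap (K := K) Y).quotKerEquivOfSurjective (evalMap_surjective Y))

lemma adeg_affVanishingIdeal (Y : Finset (Fin s → K)) :
    adeg (affVanishingIdeal (Y : Set (Fin s → K))) = Y.card := by
  rw [adeg, (vanishingEquiv Y).finrank_eq, Module.finrank_fintype_fun_eq_card,
    Fintype.card_coe]

instance vanishing_finiteDimensional (Y : Finset (Fin s → K)) :
    FiniteDimensional K (MvPolynomial (Fin s) K ⧸ affVanishingIdeal (Y : Set (Fin s → K))) :=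
  Module.Finite.equiv (vanishingEquiv Y).symm

end Aux3

section Aux4

lemma sup_span_eq_vanishing (X : Finset (Fin s → K)) (F : Finset (MvPolynomial (Fin s) K))
    (V : Finset (Fin s → K)) (hV : ∀ z, z ∈ V ↔ z ∈ X ∧ ∀ f ∈ F, eval z f = 0) :
    affVanishingIdeal (X : Set (Fin s → K)) ⊔ Ideal.span (F : Set (MvPolynomial (Fin s) K))
      = affVanishingIdeal (V : Set (Fin s → K)) := by
  classical
  apply le_antisymm
  · refine sup_le ?_ ?_
    · intro g hg z hz
      exact hg z ((hV z).1 hz).1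
    · rw [Ideal.span_le]
      intro f hf z hz
      exact ((hV z).1 hz).2 f hf
  · intro g hg
    set term : X → MvPolynomial (Fin s) K := fun x =>
      if h : ∃ f ∈ F, eval (x : Fin s → K) f ≠ 0 then
        C (eval (x : Fin s → K) g * (eval (x : Fin s → K) h.choose)⁻¹) *
          Classical.choose (exists_indicator X (x : Fin s → K)) * h.choose
      else 0 with hterm
    set q := ∑ x ∈ X.attach, term x with hq
    have hqJ : q ∈ Ideal.span (F : Set (MvPolynomial (Fin s) K)) := by
      refine Ideal.sum_mem _ fun x _ => ?_
      rw [hterm]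
      by_cases h : ∃ f ∈ F, eval (x : Fin s → K) f ≠ 0
      · simp only [dif_pos h]
        exact Ideal.mul_mem_left _ _ (Ideal.subset_span h.choose_spec.1)
      · simp only [dif_neg h]
        exact Ideal.zero_mem _
    have heval : ∀ z ∈ X, eval z q = eval z g := by
      intro z hz
      rw [hq, map_sum, Finset.sum_eq_single (⟨z, hz⟩ : X)]
      · rw [hterm]
        by_cases h : ∃ f ∈ F, eval ((⟨z, hz⟩ : X) : Fin s → K) f ≠ 0
        · simp only [dif_pos h]
          obtain ⟨e1, _⟩ := Classical.choose_spec (exists_indicator X z)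
          rw [map_mul, map_mul, eval_C]
          show eval z g * (eval z h.choose)⁻¹ *
            eval z (Classical.choose (exists_indicator X z)) * eval z h.choose = eval z g
          rw [e1, mul_one]
          field_simp [h.choose_spec.2]
        · simp only [dif_neg h]
          push_neg at h
          have hzV : z ∈ V := (hV z).2 ⟨hz, h⟩
          rw [map_zero, hg z hzV]
      · intro x _ hxz
        rw [hterm]
        by_cases h : ∃ f ∈ F, eval (x : Fin s → K) f ≠ 0
        · simp only [dif_pos h]
          obtain ⟨_, e2⟩ := Classical.choose_spec (exists_indicator X (x : Fin s → K))
          rw [map_mul, map_mul, e2 z hz (fun hh => hxz (Subtype.ext hh).symm),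
            mul_zero, zero_mul]
        · simp only [dif_neg h, map_zero]
      · intro hzz
        exact absurd (Finset.mem_attach _ _) hzz
    have hsub : g - q ∈ affVanishingIdeal (X : Set (Fin s → K)) := by
      intro z hz
      rw [map_sub, heval z hz, sub_self]
    have := add_mem (Submodule.mem_sup_left hsub) (Submodule.mem_sup_right hqJ)
    rwa [sub_add_cancel] at this

end Aux4

section Aux5
variable (m : MonomialOrder (Fin s))

/-- `adeg` as a finrank of the `K`-module quotient. -/
lemma adeg_eq_finrank (P : Ideal (MvPolynomial (Fin s) K)) :
    adeg P = Module.finrank K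
      (MvPolynomial (Fin s) K ⧸ Submodule.restrictScalars K P) :=
  (Submodule.Quotient.restrictScalarsEquiv K P).symm.finrank_eq

theorem degree_initial_footprint' (X : Finset (Fin s → K))
    (F : Finset (MvPolynomial (Fin s) K)) :
    (VX X F).ncard =
        adeg (affVanishingIdeal (X : Set (Fin s → K)) ⊔
          Ideal.span (F : Set (MvPolynomial (Fin s) K))) ∧
    adeg (affVanishingIdeal (X : Set (Fin s → K)) ⊔
          Ideal.span (F : Set (MvPolynomial (Fin s) K))) ≤
      adeg (initialIdeal m (affVanishingIdeal (X : Set (Fin s → K))) ⊔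
        Ideal.span (leadMonSet m F)) ∧
    adeg (initialIdeal m (affVanishingIdeal (X : Set (Fin s → K))) ⊔
        Ideal.span (leadMonSet m F)) ≤
      adeg (affVanishingIdeal (X : Set (Fin s → K))) ∧
    adeg (affVanishingIdeal (X : Set (Fin s → K))) = X.card ∧
    (¬ Ideal.span (F : Set (MvPolynomial (Fin s) K)) ≤
        affVanishingIdeal (X : Set (Fin s → K)) →
      adeg (affVanishingIdeal (X : Set (Fin s → K)) ⊔
          Ideal.span (F : Set (MvPolynomial (Fin s) K))) <
        adeg (affVanishingIdeal (X : Set (Fin s → K)))) := by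
  classical
  set I := affVanishingIdeal (X : Set (Fin s → K)) with hI
  set J := Ideal.span (F : Set (MvPolynomial (Fin s) K)) with hJ
  set M₀ := initialIdeal m I with hM₀def
  set M := M₀ ⊔ Ideal.span (leadMonSet m F) with hMdef
  set G₀ : Set (MvPolynomial (Fin s) K) := { g | ∃ f ∈ I, f ≠ 0 ∧ g = leadMon m f } with hG₀
  set G : Set (MvPolynomial (Fin s) K) := G₀ ∪ leadMonSet m F with hG
  have hMspan : M = Ideal.span G := by
    rw [hMdef, hM₀def, initialIdeal, hG, Ideal.span_union, hG₀]
  have hGmon : ∀ g ∈ G, ∃ b : Fin s →₀ ℕ, g = monomial b (1 : K) := by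
    rintro g (⟨f, -, -, rfl⟩ | ⟨f, -, -, rfl⟩) <;> exact ⟨leadExp m f, rfl⟩
  have hG₀mon : ∀ g ∈ G₀, ∃ b : Fin s →₀ ℕ, g = monomial b (1 : K) := by
    rintro g ⟨f, -, -, rfl⟩; exact ⟨leadExp m f, rfl⟩
  -- the finite set of points of the variety of F in X
  set V := X.filter (fun z => ∀ f ∈ F, eval z f = 0) with hV
  have hVmem : ∀ z, z ∈ V ↔ z ∈ X ∧ ∀ f ∈ F, eval z f = 0 := by
    intro z; rw [hV, Finset.mem_filter]
  have hIJ : I ⊔ J = affVanishingIdeal (V : Set (Fin s → K)) :=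
    sup_span_eq_vanishing X F V hVmem
  have hVset : VX X F = (V : Set (Fin s → K)) := by
    ext z
    simp only [VX, Set.mem_setOf_eq, Finset.coe_filter, hV]
  have part1 : (VX X F).ncard = adeg (I ⊔ J) := by
    rw [hVset, Set.ncard_coe_finset, hIJ, adeg_affVanishingIdeal]
  have part4 : adeg I = X.card := adeg_affVanishingIdeal X
  -- divisibility data
  have hdiv0 : ∀ a : Fin s →₀ ℕ, monomial a (1 : K) ∈ M₀ →
      ∃ h ∈ I, h ≠ 0 ∧ ∃ b : Fin s →₀ ℕ, a = b + leadExp m h := by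
    intro a ha
    rw [hM₀def, initialIdeal] at ha
    obtain ⟨g, hgG, b, c, hgb, rfl⟩ := monomial_mem_monomial_span hG₀mon ha
    obtain ⟨f, hfI, hf0, hgf⟩ := hgG
    have hb : b = leadExp m f := by
      rw [hgf, leadMon] at hgb
      rcases (monomial_eq_monomial_iff _ _ _ _).1 hgb with ⟨h1, -⟩ | ⟨h1, -⟩
      · exact h1.symm
      · exact absurd h1 one_ne_zero
    exact ⟨f, hfI, hf0, c, by rw [hb, add_comm]⟩
  have hdivM : ∀ a : Fin s →₀ ℕ, monomial a (1 : K) ∈ M →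
      ∃ h ∈ I ⊔ J, h ≠ 0 ∧ ∃ b : Fin s →₀ ℕ, a = b + leadExp m h := by
    intro a ha
    rw [hMspan] at ha
    obtain ⟨g, hgG, b, c, hgb, rfl⟩ := monomial_mem_monomial_span hGmon ha
    rcases hgG with ⟨f, hfI, hf0, hgf⟩ | ⟨f, hfF, hf0, hgf⟩
    · have hb : b = leadExp m f := by
        rw [hgf, leadMon] at hgb
        rcases (monomial_eq_monomial_iff _ _ _ _).1 hgb with ⟨h1, -⟩ | ⟨h1, -⟩
        · exact h1.symm
        · exact absurd h1 one_ne_zero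
      exact ⟨f, Submodule.mem_sup_left hfI, hf0, c, by rw [hb, add_comm]⟩
    · have hb : b = leadExp m f := by
        rw [hgf, leadMon] at hgb
        rcases (monomial_eq_monomial_iff _ _ _ _).1 hgb with ⟨h1, -⟩ | ⟨h1, -⟩
        · exact h1.symm
        · exact absurd h1 one_ne_zero
      exact ⟨f, Submodule.mem_sup_right (Ideal.subset_span hfF), hf0, c, by rw [hb, add_comm]⟩
  have hdivMM : ∀ a : Fin s →₀ ℕ, monomial a (1 : K) ∈ M →
      ∃ h ∈ M, h ≠ 0 ∧ ∃ b : Fin s →₀ ℕ, a = b + leadExp m h := by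
    intro a ha
    rw [hMspan] at ha
    obtain ⟨g, hgG, b, c, hgb, rfl⟩ := monomial_mem_monomial_span hGmon ha
    refine ⟨g, hMspan ▸ Ideal.subset_span hgG, ?_, c, ?_⟩
    · rw [hgb]; intro h0; exact one_ne_zero (monomial_eq_zero.1 h0)
    · rw [hgb, leadExp_monomial, add_comm]
  -- linear independence data
  have hind0 : ∀ f ∈ I, f ≠ 0 → ∃ a ∈ f.support, monomial a (1 : K) ∈ M₀ := by
    intro f hfI hf0
    refine ⟨leadExp m f, leadExp_mem m hf0, ?_⟩
    rw [hM₀def, initialIdeal]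
    exact Ideal.subset_span ⟨f, hfI, hf0, rfl⟩
  have hindM : ∀ f ∈ M, f ≠ 0 → ∃ a ∈ f.support, monomial a (1 : K) ∈ M := by
    intro f hfM hf0
    obtain ⟨a, ha⟩ := support_nonempty.2 hf0
    refine ⟨a, ha, ?_⟩
    obtain ⟨g, hgG, b, c, hgb, rfl⟩ :=
      support_of_mem_monomial_span hGmon (hMspan ▸ hfM) a ha
    exact hMspan ▸ monomial_dvd_mem_span hgG hgb
  -- dimension counts
  haveI hfd : FiniteDimensional K
      (MvPolynomial (Fin s) K ⧸ Submodule.restrictScalars K I) :=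
    Module.Finite.equiv ((Submodule.Quotient.restrictScalarsEquiv K I).trans
      (vanishingEquiv X)).symm
  have li0 := indep_std (K := K) I M₀ hind0
  haveI : Finite {a : Fin s →₀ ℕ // monomial a (1 : K) ∉ M₀} :=
    li0.finite_of_isNoetherian
  haveI : Fintype {a : Fin s →₀ ℕ // monomial a (1 : K) ∉ M₀} := Fintype.ofFinite _
  let emb : {a : Fin s →₀ ℕ // monomial a (1 : K) ∉ M} →
      {a : Fin s →₀ ℕ // monomial a (1 : K) ∉ M₀} :=
    fun a => ⟨a.1, fun h => a.2 (show (monomial a.1 (1 : K)) ∈ M₀ ⊔ Ideal.span (leadMonSet m F)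
      from Submodule.mem_sup_left h)⟩
  have hemb : Function.Injective emb := by
    intro a b hab
    have : (emb a).1 = (emb b).1 := by rw [hab]
    exact Subtype.ext this
  haveI : Finite {a : Fin s →₀ ℕ // monomial a (1 : K) ∉ M} := Finite.of_injective emb hemb
  haveI : Fintype {a : Fin s →₀ ℕ // monomial a (1 : K) ∉ M} := Fintype.ofFinite _
  -- adeg I = card T₀
  have b0 : Module.Basis {a : Fin s →₀ ℕ // monomial a (1 : K) ∉ M₀} K
      (MvPolynomial (Fin s) K ⧸ Submodule.restrictScalars K I) :=
    Module.Basis.mk li0 (by rw [span_std m I M₀ hdiv0])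
  have hr0 : adeg I = Fintype.card {a : Fin s →₀ ℕ // monomial a (1 : K) ∉ M₀} := by
    rw [adeg_eq_finrank, Module.finrank_eq_card_basis b0]
  -- adeg M = card T
  have liM := indep_std (K := K) M M hindM
  have bM : Module.Basis {a : Fin s →₀ ℕ // monomial a (1 : K) ∉ M} K
      (MvPolynomial (Fin s) K ⧸ Submodule.restrictScalars K M) :=
    Module.Basis.mk liM (by rw [span_std m M M hdivMM])
  haveI hfdM : FiniteDimensional K
      (MvPolynomial (Fin s) K ⧸ Submodule.restrictScalars K M) :=
    Module.Finite.of_basis bM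
  have hrM : adeg M = Fintype.card {a : Fin s →₀ ℕ // monomial a (1 : K) ∉ M} := by
    rw [adeg_eq_finrank, Module.finrank_eq_card_basis bM]
  -- part 3
  have part3 : adeg M ≤ adeg I := by
    rw [hrM, hr0]
    exact Fintype.card_le_of_injective emb hemb
  -- part 2
  have part2 : adeg (I ⊔ J) ≤ adeg M := by
    rw [adeg_eq_finrank, hrM]
    exact finrank_le_of_span_eq_top (span_std m (I ⊔ J) M hdivM)
  -- part 5
  have part5 : ¬ J ≤ I → adeg (I ⊔ J) < adeg I := by
    intro hJI
    have : ¬ (F : Set (MvPolynomial (Fin s) K)) ⊆ (I : Set (MvPolynomial (Fin s) K)) := by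
      intro hsub
      exact hJI (Ideal.span_le.2 hsub)
    obtain ⟨f, hfF, hfI⟩ := Set.not_subset.1 this
    have : ¬ ∀ x ∈ X, eval x f = 0 := hfI
    push_neg at this
    obtain ⟨x, hxX, hxf⟩ := this
    have hxV : x ∉ V := by
      rw [hVmem]
      rintro ⟨-, h⟩
      exact hxf (h f (Finset.mem_coe.1 hfF))
    have hcard : V.card < X.card :=
      Finset.card_lt_card ⟨Finset.filter_subset _ _, fun hsub => hxV (hsub hxX)⟩
    rw [← part1, hVset, Set.ncard_coe_finset, part4]
    exact hcard
  exact ⟨part1, part2, part3, part4, part5⟩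

end Aux5


/-- Theorem (degree–initial-ideal–footprint inequalities). -/
theorem degree_initial_footprint (X : Finset (Fin s → K)) (m : MonomialOrder (Fin s))
    (F : Finset (MvPolynomial (Fin s) K))
    (hcol : Submodule.colon (affVanishingIdeal (X : Set (Fin s → K)))
        (Ideal.span (F : Set (MvPolynomial (Fin s) K))) ≠
      affVanishingIdeal (X : Set (Fin s → K))) :
    (VX X F).ncard =
        adeg (affVanishingIdeal (X : Set (Fin s → K)) ⊔
          Ideal.span (F : Set (MvPolynomial (Fin s) K))) ∧
    adeg (affVanishingIdeal (X : Set (Fin s → K)) ⊔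
          Ideal.span (F : Set (MvPolynomial (Fin s) K))) ≤
      adeg (initialIdeal m (affVanishingIdeal (X : Set (Fin s → K))) ⊔
        Ideal.span (leadMonSet m F)) ∧
    adeg (initialIdeal m (affVanishingIdeal (X : Set (Fin s → K))) ⊔
        Ideal.span (leadMonSet m F)) ≤
      adeg (affVanishingIdeal (X : Set (Fin s → K))) ∧
    adeg (affVanishingIdeal (X : Set (Fin s → K))) = X.card ∧
    (¬ Ideal.span (F : Set (MvPolynomial (Fin s) K)) ≤
        affVanishingIdeal (X : Set (Fin s → K)) →
      adeg (affVanishingIdeal (X : Set (Fin s → K)) ⊔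
          Ideal.span (F : Set (MvPolynomial (Fin s) K))) <
        adeg (affVanishingIdeal (X : Set (Fin s → K)))) := by
  exact degree_initial_footprint' m X F
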